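/- Typed terms multiply inner products (two variables): given a valid typing judgment Δ, x:♯A, y:♯B ⊢ s⃗ : C, a substitution σ ∈ ⟦Δ⟧ and value distributions u⃗₁, u⃗₂ ∈ ⟦♯A⟧ and v⃗₁, v⃗₂ ∈ ⟦♯B⟧, there exist value distributions w⃗₁, w⃗₂ ∈ ⟦C⟧ such that s⃗⟨σ, x:=u⃗ⱼ, y:=v⃗ⱼ⟩ ≻≻ w⃗ⱼ for j = 1,2 and ⟨w⃗₁|w⃗₂⟩ = ⟨u⃗₁|u⃗₂⟩·⟨v⃗₁|v⃗₂⟩. -/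
import Mathlib


namespace LinAlg

/-! ### Syntax: pure values, pure terms, term distributions -/

mutual
inductive Val : Type where
  | var : ℕ → Val
  | lam : ℕ → Distr → Val
  | star : Val
  | pair : Val → Val → Val
  | inl : Val → Val
  | inr : Val → Val
inductive Term : Type where
  | val : Val → Term
  | app : Term → Term → Term
  | seq : Term → Distr → Term
  | letp : ℕ → ℕ → Term → Distr → Term
  | matc : Term → ℕ → Distr → ℕ → Distr → Term
inductive Distr : Type where
  | zero : Distr
  | single : Term → Distr
  | add : Distr → Distr → Distr
  | smul : ℂ → Distr → Distr
end

noncomputable instance : DecidableEq Val := fun _ _ => Classical.dec _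
noncomputable instance : DecidableEq Term := fun _ _ => Classical.dec _
noncomputable instance : DecidableEq Distr := fun _ _ => Classical.dec _

/-! ### The shallow congruence ≡ on term distributions -/

inductive Cong : Distr → Distr → Prop where
  | addZero (d : Distr) : Cong (d.add .zero) d
  | oneSmul (d : Distr) : Cong (Distr.smul 1 d) d
  | smulSmul (a b : ℂ) (d : Distr) : Cong (Distr.smul a (Distr.smul b d)) (Distr.smul (a * b) d)
  | addComm (d₁ d₂ : Distr) : Cong (d₁.add d₂) (d₂.add d₁)
  | addAssoc (d₁ d₂ d₃ : Distr) : Cong ((d₁.add d₂).add d₃) (d₁.add (d₂.add d₃))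
  | smulDistrib (a b : ℂ) (d : Distr) : Cong (Distr.smul (a + b) d) ((Distr.smul a d).add (Distr.smul b d))
  | smulAdd (a : ℂ) (d₁ d₂ : Distr) : Cong (Distr.smul a (d₁.add d₂)) ((Distr.smul a d₁).add (Distr.smul a d₂))
  | refl (d : Distr) : Cong d d
  | symm {d₁ d₂ : Distr} : Cong d₁ d₂ → Cong d₂ d₁
  | trans {d₁ d₂ d₃ : Distr} : Cong d₁ d₂ → Cong d₂ d₃ → Cong d₁ d₃
  | addCongr {d₁ d₁' d₂ d₂' : Distr} : Cong d₁ d₁' → Cong d₂ d₂' → Cong (d₁.add d₂) (d₁'.add d₂')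
  | smulCongr (a : ℂ) {d d' : Distr} : Cong d d' → Cong (Distr.smul a d) (Distr.smul a d')

/-! ### Free variables -/

mutual
def fvV : Val → Finset ℕ
  | .var y => {y}
  | .lam y b => fvD b \ {y}
  | .star => ∅
  | .pair v₁ v₂ => fvV v₁ ∪ fvV v₂
  | .inl v => fvV v
  | .inr v => fvV v
def fvT : Term → Finset ℕ
  | .val v => fvV v
  | .app s t => fvT s ∪ fvT t
  | .seq t s => fvT t ∪ fvD s
  | .letp y z t s => fvT t ∪ (fvD s \ {y, z})
  | .matc t y s₁ z s₂ => fvT t ∪ (fvD s₁ \ {y}) ∪ (fvD s₂ \ {z})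
def fvD : Distr → Finset ℕ
  | .zero => ∅
  | .single t => fvT t
  | .add d₁ d₂ => fvD d₁ ∪ fvD d₂
  | .smul _ d => fvD d
end

/-! ### Pure substitution -/

mutual
def substV (x : ℕ) (w : Val) : Val → Val
  | .var y => if y = x then w else .var y
  | .lam y b => if y = x then .lam y b else .lam y (substD x w b)
  | .star => .star
  | .pair v₁ v₂ => .pair (substV x w v₁) (substV x w v₂)
  | .inl v => .inl (substV x w v)
  | .inr v => .inr (substV x w v)
def substT (x : ℕ) (w : Val) : Term → Term
  | .val v => .val (substV x w v)
  | .app s t => .app (substT x w s) (substT x w t)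
  | .seq t s => .seq (substT x w t) (substD x w s)
  | .letp y z t s =>
      .letp y z (substT x w t) (if y = x ∨ z = x then s else substD x w s)
  | .matc t y s₁ z s₂ =>
      .matc (substT x w t) y (if y = x then s₁ else substD x w s₁)
        z (if z = x then s₂ else substD x w s₂)
def substD (x : ℕ) (w : Val) : Distr → Distr
  | .zero => .zero
  | .single t => .single (substT x w t)
  | .add d₁ d₂ => .add (substD x w d₁) (substD x w d₂)
  | .smul a d => .smul a (substD x w d)
end

/-! ### Linear extensions of the syntactic constructs -/

def appTD (s : Term) : Distr → Distr
  | .zero => .zero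
  | .single t => .single (.app s t)
  | .add d₁ d₂ => .add (appTD s d₁) (appTD s d₂)
  | .smul a d => .smul a (appTD s d)

def appDV : Distr → Val → Distr
  | .zero, _ => .zero
  | .single t, v => .single (.app t (.val v))
  | .add d₁ d₂, v => .add (appDV d₁ v) (appDV d₂ v)
  | .smul a d, v => .smul a (appDV d v)

def seqD : Distr → Distr → Distr
  | .zero, _ => .zero
  | .single t, s => .single (.seq t s)
  | .add d₁ d₂, s => .add (seqD d₁ s) (seqD d₂ s)
  | .smul a d, s => .smul a (seqD d s)

def letpD (x y : ℕ) : Distr → Distr → Distr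
  | .zero, _ => .zero
  | .single t, s => .single (.letp x y t s)
  | .add d₁ d₂, s => .add (letpD x y d₁ s) (letpD x y d₂ s)
  | .smul a d, s => .smul a (letpD x y d s)

def matcD : Distr → ℕ → Distr → ℕ → Distr → Distr
  | .zero, _, _, _, _ => .zero
  | .single t, y, s₁, z, s₂ => .single (.matc t y s₁ z s₂)
  | .add d₁ d₂, y, s₁, z, s₂ => .add (matcD d₁ y s₁ z s₂) (matcD d₂ y s₁ z s₂)
  | .smul a d, y, s₁, z, s₂ => .smul a (matcD d y s₁ z s₂)

/-- Bilinear application of distributions:  (Σᵢ αᵢ·tᵢ)(Σⱼ βⱼ·sⱼ) = Σᵢⱼ αᵢβⱼ·(tᵢ sⱼ). -/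
def appD : Distr → Distr → Distr
  | .zero, _ => .zero
  | .single t, w => appTD t w
  | .add d₁ d₂, w => .add (appD d₁ w) (appD d₂ w)
  | .smul a d, w => .smul a (appD d w)

/-- Bilinear substitution  d⟨x := w⃗⟩ = Σⱼ βⱼ · d[x := wⱼ]  (recursion on the value
distribution w⃗; non-value summands are junk and are sent to 0⃗). -/
def bsubst (x : ℕ) (d : Distr) : Distr → Distr
  | .zero => .zero
  | .single (.val w) => substD x w d
  | .single _ => .zero
  | .add w₁ w₂ => .add (bsubst x d w₁) (bsubst x d w₂)
  | .smul a w => .smul a (bsubst x d w)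

/-! ### Evaluation -/

inductive Atom : Term → Distr → Prop where
  | beta (x : ℕ) (b : Distr) (v : Val) :
      Atom (.app (.val (.lam x b)) (.val v)) (substD x v b)
  | seqStar (s : Distr) : Atom (.seq (.val .star) s) s
  | letPair (x y : ℕ) (v w : Val) (s : Distr) :
      Atom (.letp x y (.val (.pair v w)) s) (substD y w (substD x v s))
  | matchInl (v : Val) (y : ℕ) (s₁ : Distr) (z : ℕ) (s₂ : Distr) :
      Atom (.matc (.val (.inl v)) y s₁ z s₂) (substD y v s₁)
  | matchInr (v : Val) (y : ℕ) (s₁ : Distr) (z : ℕ) (s₂ : Distr) :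
      Atom (.matc (.val (.inr v)) y s₁ z s₂) (substD z v s₂)
  | appR (s : Term) {t : Term} {d : Distr} : Atom t d → Atom (.app s t) (appTD s d)
  | appL (v : Val) {t : Term} {d : Distr} : Atom t d → Atom (.app t (.val v)) (appDV d v)
  | seqC (s : Distr) {t : Term} {d : Distr} : Atom t d → Atom (.seq t s) (seqD d s)
  | letC (x y : ℕ) (s : Distr) {t : Term} {d : Distr} :
      Atom t d → Atom (.letp x y t s) (letpD x y d s)
  | matcC (y : ℕ) (s₁ : Distr) (z : ℕ) (s₂ : Distr) {t : Term} {d : Distr} :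
      Atom t d → Atom (.matc t y s₁ z s₂) (matcD d y s₁ z s₂)

/-- One-step evaluation:  t⃗ ≻ t⃗′. -/
def Step (d d' : Distr) : Prop :=
  ∃ (a : ℂ) (s : Term) (s' r : Distr),
    Cong d (Distr.add (.smul a (.single s)) r) ∧
    Cong d' (Distr.add (.smul a s') r) ∧ Atom s s'

/-- Evaluation  t⃗ ≻≻ t⃗′:  reflexive-transitive closure of one-step evaluation. -/
def Eval : Distr → Distr → Prop := Relation.ReflTransGen Step

/-! ### Value distributions, inner product, norm -/

def IsValT : Term → Prop
  | .val _ => True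
  | _ => False

def IsValD : Distr → Prop
  | .zero => True
  | .single t => IsValT t
  | .add d₁ d₂ => IsValD d₁ ∧ IsValD d₂
  | .smul _ d => IsValD d

/-- The set of closed value distributions. -/
def ClosedValD : Set Distr := {d | IsValD d ∧ fvD d = ∅}

/-- Total coefficient of the pure term `t` in the distribution `d`. -/
noncomputable def coeff : Distr → Term → ℂ
  | .zero, _ => 0
  | .single s, t => if s = t then 1 else 0
  | .add d₁ d₂, t => coeff d₁ t + coeff d₂ t
  | .smul a d, t => a * coeff d t

/-- The domain of a distribution (all pure terms occurring in it, even with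
coefficient 0). -/
noncomputable def domD : Distr → Finset Term
  | .zero => ∅
  | .single t => {t}
  | .add d₁ d₂ => domD d₁ ∪ domD d₂
  | .smul _ d => domD d

/-- The inner product ⟨v⃗|w⃗⟩ on value distributions. -/
noncomputable def innerD (v w : Distr) : ℂ :=
  ∑ t ∈ domD v, (starRingEnd ℂ) (coeff v t) * coeff w t

/-- The pseudo-ℓ²-norm ‖v⃗‖. -/
noncomputable def normD (v : Distr) : ℝ := Real.sqrt (innerD v v).re

/-- The unit sphere S of closed value distributions of norm 1. -/
def Sphere : Set Distr := {d | d ∈ ClosedValD ∧ normD d = 1}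

/-- Span(X): weak linear combinations of elements of X (taken modulo ≡). -/
inductive Span (X : Set Distr) : Distr → Prop where
  | mem {d : Distr} : d ∈ X → Span X d
  | zero : Span X .zero
  | add {d₁ d₂ : Distr} : Span X d₁ → Span X d₂ → Span X (d₁.add d₂)
  | smul (a : ℂ) {d : Distr} : Span X d → Span X (Distr.smul a d)
  | congr {d d' : Distr} : Span X d → Cong d d' → Span X d'

/-! ### Realizability: unitary types -/

/-- t⃗ ⊩ A :  t⃗ evaluates to some vector of ⟦A⟧. -/
def Realizes (A : Set Distr) (t : Distr) : Prop := ∃ v ∈ A, Eval t v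

/-- |A| : the set of (closed) realizers of A. -/
def realizersOf (A : Set Distr) : Set Distr := {t | fvD t = ∅ ∧ Realizes A t}

/-! ### Type constructors -/

def UnitT : Set Distr := {Distr.single (.val .star)}

/-- ♭A : the basis of A. -/
def flatT (X : Set Distr) : Set Distr :=
  {e | ∃ d ∈ X, ∃ v : Val, (Term.val v) ∈ domD d ∧ e = Distr.single (.val v)}

/-- ♯A : the unitary span of A. -/
def sharpT (X : Set Distr) : Set Distr := {d | Span X d ∧ d ∈ Sphere}

/-- Linear extension of a value constructor. -/
def mapVD (f : Val → Val) : Distr → Distr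
  | .zero => .zero
  | .single (.val v) => .single (.val (f v))
  | .single t => .single t
  | .add d₁ d₂ => .add (mapVD f d₁) (mapVD f d₂)
  | .smul a d => .smul a (mapVD f d)

def inlD : Distr → Distr := mapVD Val.inl
def inrD : Distr → Distr := mapVD Val.inr

/-- Bilinear extension of pairing. -/
def pairD : Distr → Distr → Distr
  | .zero, _ => .zero
  | .single (.val v), w => mapVD (Val.pair v) w
  | .single t, _ => .single t
  | .add d₁ d₂, w => .add (pairD d₁ w) (pairD d₂ w)
  | .smul a d, w => .smul a (pairD d w)

/-- A + B (simple sum). -/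
def plusT (A B : Set Distr) : Set Distr :=
  {d | (∃ v ∈ A, d = inlD v) ∨ (∃ w ∈ B, d = inrD w)}

/-- A × B (simple product). -/
def timesT (A B : Set Distr) : Set Distr :=
  {d | ∃ v ∈ A, ∃ w ∈ B, d = pairD v w}

/-- A → B (pure arrow). -/
def arrowT (A B : Set Distr) : Set Distr :=
  {d | ∃ (x : ℕ) (b : Distr), d = Distr.single (.val (.lam x b)) ∧ fvD d = ∅ ∧
      ∀ v ∈ A, Realizes B (bsubst x b v)}

/-- Σᵢ αᵢ · λx.t⃗ᵢ  ↦  Σᵢ αᵢ · t⃗ᵢ  (strips the λx in front of each summand). -/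
def stripLam (x : ℕ) : Distr → Distr
  | .zero => .zero
  | .single (.val (.lam y b)) => if y = x then b else .single (.val (.lam y b))
  | .single t => .single t
  | .add d₁ d₂ => .add (stripLam x d₁) (stripLam x d₂)
  | .smul a d => .smul a (stripLam x d)

/-- A ⇒ B (unitary arrow). -/
def uarrowT (A B : Set Distr) : Set Distr :=
  {d | d ∈ Sphere ∧ ∃ x : ℕ,
      (∀ t ∈ domD d, ∃ b : Distr, t = Term.val (.lam x b)) ∧
      ∀ v ∈ A, Realizes B (bsubst x (stripLam x d) v)}

/-! ### Booleans -/

def ttD : Distr := .single (.val (.inl .star))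
def ffD : Distr := .single (.val (.inr .star))

/-- 𝔹 = 𝕌 + 𝕌. -/
def BoolT : Set Distr := plusT UnitT UnitT

/-- ♯𝔹, the type of unitary Booleans. -/
def sharpBool : Set Distr := sharpT BoolT

/-- Boolean projection π : Span({tt,ff}) → ℂ². -/
noncomputable def piB (d : Distr) : ℂ × ℂ :=
  (coeff d (.val (.inl .star)), coeff d (.val (.inr .star)))

/-- t⃗ represents the operator F : ℂ² → ℂ². -/
def Represents (td : Distr) (F : ℂ × ℂ → ℂ × ℂ) : Prop :=
  ∀ v, Span BoolT v → ∃ w, Span BoolT w ∧ Eval (appD td v) w ∧ piB w = F (piB v)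

/-- Hermitian inner product on ℂ². -/
def hinner (u v : ℂ × ℂ) : ℂ :=
  (starRingEnd ℂ) u.1 * v.1 + (starRingEnd ℂ) u.2 * v.2

/-- A unitary operator on ℂ². -/
def IsUnitaryOp (F : ℂ × ℂ → ℂ × ℂ) : Prop :=
  ∀ u v : ℂ × ℂ, hinner (F u) (F v) = hinner u v

/-! ### Typing contexts, substitutions, judgments -/

abbrev Ctx := List (ℕ × Set Distr)
abbrev Subst := List (ℕ × Distr)

/-- Applying a substitution, one bilinear substitution at a time. -/
def applySub : Distr → Subst → Distr
  | d, [] => d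
  | d, (x, w) :: σ => applySub (bsubst x d w) σ

/-- σ ∈ ⟦Γ⟧. -/
def SubMem (σ : Subst) (Γ : Ctx) : Prop :=
  List.Forall₂ (fun p q => p.1 = q.1 ∧ p.2 ∈ q.2) σ Γ

def ctxDom (Γ : Ctx) : Set ℕ := {x | ∃ A, (x, A) ∈ Γ}

/-- dom♯(Γ): the variables of Γ whose type is not a pure-value type. -/
def ctxDomSharp (Γ : Ctx) : Set ℕ := {x | ∃ A, (x, A) ∈ Γ ∧ flatT A ≠ A}

/-- All the types of the context are unitary types (subsets of the sphere). -/
def CtxUnitary (Γ : Ctx) : Prop := ∀ p ∈ Γ, p.2 ⊆ Sphere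

/-- Validity of the typing judgment  Γ ⊢ t⃗ : A. -/
def ValidJ (Γ : Ctx) (t : Distr) (A : Set Distr) : Prop :=
  ctxDomSharp Γ ⊆ (fvD t : Set ℕ) ∧ (fvD t : Set ℕ) ⊆ ctxDom Γ ∧
  ∀ σ : Subst, SubMem σ Γ → Realizes A (applySub t σ)

/-- Validity of the orthogonality judgment  Γ | Δ₁ ⊢ t⃗₁ ⊥ Δ₂ ⊢ t⃗₂ : A. -/
def OrthoJ (Γ Δ₁ Δ₂ : Ctx) (t₁ t₂ : Distr) (A : Set Distr) : Prop :=
  ValidJ (Γ ++ Δ₁) t₁ A ∧ ValidJ (Γ ++ Δ₂) t₂ A ∧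
  ∀ σ σ₁ σ₂ : Subst, SubMem σ Γ → SubMem σ₁ Δ₁ → SubMem σ₂ Δ₂ →
    ∀ v₁ v₂ : Distr, v₁ ∈ ClosedValD → v₂ ∈ ClosedValD →
      Eval (applySub t₁ (σ ++ σ₁)) v₁ → Eval (applySub t₂ (σ ++ σ₂)) v₂ →
      innerD v₁ v₂ = 0

end LinAlg


namespace LinAlg

local notation "conj'" => (starRingEnd ℂ)

/-! ### Cong helpers -/

lemma cong_zero_smul_zero : Cong Distr.zero (Distr.smul 0 .zero) := by
  have h1 : Cong (Distr.smul 1 .zero) ((Distr.smul 1 .zero).add (Distr.smul 0 .zero)) := by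
    have := Cong.smulDistrib 1 0 Distr.zero
    rwa [add_zero] at this
  refine ((Cong.oneSmul Distr.zero).symm.trans h1).trans ?_
  refine (Cong.addCongr (Cong.oneSmul _) (Cong.refl _)).trans ?_
  exact (Cong.addComm _ _).trans (Cong.addZero _)

lemma cong_smul_zero (a : ℂ) : Cong (Distr.smul a .zero) Distr.zero := by
  refine (Cong.smulCongr a cong_zero_smul_zero).trans ?_
  have := Cong.smulSmul a 0 Distr.zero
  rw [mul_zero] at this
  exact this.trans cong_zero_smul_zero.symm

lemma cong_add_add (A B P Q : Distr) :
    Cong ((A.add B).add (P.add Q)) ((A.add P).add (B.add Q)) := by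
  refine (Cong.addAssoc _ _ _).trans ?_
  refine (Cong.addCongr (Cong.refl A) ?_).trans (Cong.addAssoc _ _ _).symm
  refine (Cong.addAssoc _ _ _).symm.trans ?_
  exact (Cong.addCongr (Cong.addComm _ _) (Cong.refl _)).trans (Cong.addAssoc _ _ _)

/-! ### coeff / IsValD invariance -/

lemma coeff_cong {d d' : Distr} (h : Cong d d') : ∀ t, coeff d t = coeff d' t := by
  induction h with
  | addZero d => intro t; simp [coeff]
  | oneSmul d => intro t; simp [coeff]
  | smulSmul a b d => intro t; simp [coeff]; ring
  | addComm d₁ d₂ => intro t; simp [coeff]; ring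
  | addAssoc d₁ d₂ d₃ => intro t; simp [coeff]; ring
  | smulDistrib a b d => intro t; simp [coeff]; ring
  | smulAdd a d₁ d₂ => intro t; simp [coeff]; ring
  | refl d => intro t; rfl
  | symm _ ih => intro t; exact (ih t).symm
  | trans _ _ ih1 ih2 => intro t; rw [ih1 t, ih2 t]
  | addCongr _ _ ih1 ih2 => intro t; simp [coeff, ih1 t, ih2 t]
  | smulCongr a _ ih => intro t; simp [coeff, ih t]

lemma isvald_cong {d d' : Distr} (h : Cong d d') : IsValD d ↔ IsValD d' := by
  induction h with
  | addZero d => simp [IsValD]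
  | oneSmul d => simp [IsValD]
  | smulSmul a b d => simp [IsValD]
  | addComm d₁ d₂ => simp [IsValD]; tauto
  | addAssoc d₁ d₂ d₃ => simp [IsValD]; tauto
  | smulDistrib a b d => simp [IsValD]
  | smulAdd a d₁ d₂ => simp [IsValD]
  | refl d => rfl
  | symm _ ih => exact ih.symm
  | trans _ _ ih1 ih2 => exact ih1.trans ih2
  | addCongr _ _ ih1 ih2 => simp [IsValD]; tauto
  | smulCongr a _ ih => simpa [IsValD] using ih

end LinAlg
namespace LinAlg

/-! ### Parallel development of distributions -/

def stepAllT : Term → Distr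
  | .val v => .single (.val v)
  | .app (.val (.lam x b)) (.val v) => substD x v b
  | .app (.val v') (.val v) => .single (.app (.val v') (.val v))
  | .app s (.val v) => appDV (stepAllT s) v
  | .app s t => appTD s (stepAllT t)
  | .seq (.val .star) r => r
  | .seq (.val v) r => .single (.seq (.val v) r)
  | .seq t r => seqD (stepAllT t) r
  | .letp x y (.val (.pair v w)) r => substD y w (substD x v r)
  | .letp x y (.val v) r => .single (.letp x y (.val v) r)
  | .letp x y t r => letpD x y (stepAllT t) r
  | .matc (.val (.inl v)) y s₁ z s₂ => substD y v s₁
  | .matc (.val (.inr v)) y s₁ z s₂ => substD z v s₂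
  | .matc (.val v) y s₁ z s₂ => .single (.matc (.val v) y s₁ z s₂)
  | .matc t y s₁ z s₂ => matcD (stepAllT t) y s₁ z s₂

def stepAllD : Distr → Distr
  | .zero => .zero
  | .single t => stepAllT t
  | .add d₁ d₂ => .add (stepAllD d₁) (stepAllD d₂)
  | .smul a d => .smul a (stepAllD d)

def runD : ℕ → Distr → Distr
  | 0, d => d
  | n+1, d => runD n (stepAllD d)

lemma atom_val_false {v : Val} {d : Distr} (h : Atom (.val v) d) : False := by nomatch h

lemma stepAllT_of_atom {s : Term} {d : Distr} (h : Atom s d) : stepAllT s = d := by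
  induction h with
  | beta x b v => rfl
  | seqStar s => rfl
  | letPair x y v w s => rfl
  | matchInl v y s₁ z s₂ => rfl
  | matchInr v y s₁ z s₂ => rfl
  | @appR s t d h ih =>
      cases t with
      | val v => exact absurd h atom_val_false
      | app a b => simp only [stepAllT, ih]
      | seq a b => simp only [stepAllT, ih]
      | letp a b c e => simp only [stepAllT, ih]
      | matc a b c e f => simp only [stepAllT, ih]
  | @appL v t d h ih =>
      cases t with
      | val v' => exact absurd h atom_val_false
      | app a b => simp only [stepAllT, ih]
      | seq a b => simp only [stepAllT, ih]
      | letp a b c e => simp only [stepAllT, ih]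
      | matc a b c e f => simp only [stepAllT, ih]
  | @seqC s t d h ih =>
      cases t with
      | val v' => exact absurd h atom_val_false
      | app a b => simp only [stepAllT, ih]
      | seq a b => simp only [stepAllT, ih]
      | letp a b c e => simp only [stepAllT, ih]
      | matc a b c e f => simp only [stepAllT, ih]
  | @letC x y s t d h ih =>
      cases t with
      | val v' => exact absurd h atom_val_false
      | app a b => simp only [stepAllT, ih]
      | seq a b => simp only [stepAllT, ih]
      | letp a b c e => simp only [stepAllT, ih]
      | matc a b c e f => simp only [stepAllT, ih]
  | @matcC y s₁ z s₂ t d h ih =>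
      cases t with
      | val v' => exact absurd h atom_val_false
      | app a b => simp only [stepAllT, ih]
      | seq a b => simp only [stepAllT, ih]
      | letp a b c e => simp only [stepAllT, ih]
      | matc a b c e f => simp only [stepAllT, ih]

lemma stepAllD_of_val : ∀ d : Distr, IsValD d → stepAllD d = d
  | .zero, _ => rfl
  | .single t, h => by
      cases t with
      | val v => rfl
      | app a b => exact absurd h (by simp [IsValD, IsValT])
      | seq a b => exact absurd h (by simp [IsValD, IsValT])
      | letp a b c e => exact absurd h (by simp [IsValD, IsValT])
      | matc a b c e f => exact absurd h (by simp [IsValD, IsValT])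
  | .add d₁ d₂, h => by
      have h' : IsValD d₁ ∧ IsValD d₂ := h
      show Distr.add (stepAllD d₁) (stepAllD d₂) = _
      rw [stepAllD_of_val d₁ h'.1, stepAllD_of_val d₂ h'.2]
  | .smul a d, h => by
      show Distr.smul a (stepAllD d) = _
      rw [stepAllD_of_val d h]

lemma runD_of_val {d : Distr} (h : IsValD d) : ∀ n, runD n d = d := by
  intro n
  induction n with
  | zero => rfl
  | succ n ih => show runD n (stepAllD d) = d; rw [stepAllD_of_val d h]; exact ih

lemma runD_add (n : ℕ) : ∀ d₁ d₂ : Distr, runD n (d₁.add d₂) = (runD n d₁).add (runD n d₂) := by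
  induction n with
  | zero => intro d₁ d₂; rfl
  | succ n ih => intro d₁ d₂; show runD n ((stepAllD d₁).add (stepAllD d₂)) = _; exact ih _ _

lemma runD_smul (n : ℕ) : ∀ (a : ℂ) (d : Distr), runD n (.smul a d) = .smul a (runD n d) := by
  induction n with
  | zero => intro a d; rfl
  | succ n ih => intro a d; show runD n (.smul a (stepAllD d)) = _; exact ih _ _

lemma runD_zero' (n : ℕ) : runD n Distr.zero = Distr.zero := by
  induction n with
  | zero => rfl
  | succ n ih => exact ih

lemma cong_stepAllD {d d' : Distr} (h : Cong d d') : Cong (stepAllD d) (stepAllD d') := by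
  induction h with
  | addZero d => exact Cong.addZero _
  | oneSmul d => exact Cong.oneSmul _
  | smulSmul a b d => exact Cong.smulSmul _ _ _
  | addComm d₁ d₂ => exact Cong.addComm _ _
  | addAssoc d₁ d₂ d₃ => exact Cong.addAssoc _ _ _
  | smulDistrib a b d => exact Cong.smulDistrib _ _ _
  | smulAdd a d₁ d₂ => exact Cong.smulAdd _ _ _
  | refl d => exact Cong.refl _
  | symm _ ih => exact ih.symm
  | trans _ _ ih1 ih2 => exact ih1.trans ih2
  | addCongr _ _ ih1 ih2 => exact Cong.addCongr ih1 ih2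
  | smulCongr a _ ih => exact Cong.smulCongr a ih

lemma cong_runD (n : ℕ) {d d' : Distr} (h : Cong d d') : Cong (runD n d) (runD n d') := by
  induction n generalizing d d' with
  | zero => exact h
  | succ n ih => exact ih (cong_stepAllD h)

lemma runD_succ_comm (n : ℕ) : ∀ d, runD (n+1) d = stepAllD (runD n d) := by
  induction n with
  | zero => intro d; rfl
  | succ n ih => intro d; show runD (n+1) (stepAllD d) = _; exact ih _

lemma runD_stab {d : Distr} {N : ℕ} (h : IsValD (runD N d)) :
    ∀ n, N ≤ n → runD n d = runD N d := by
  intro n hn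
  induction n with
  | zero => rw [show N = 0 by omega]
  | succ n ih =>
    rcases Nat.lt_or_ge N (n+1) with h1 | h1
    · have hn' : N ≤ n := by omega
      rw [runD_succ_comm, ih hn', stepAllD_of_val _ h]
    · have : N = n + 1 := by omega
      rw [this]

end LinAlg
namespace LinAlg

/-! ### Convergence and uniqueness of value results -/

lemma eval_conv {d v : Distr} (he : Eval d v) (hv : IsValD v) :
    ∃ N, ∀ n, N ≤ n → IsValD (runD n d) ∧ ∀ t, coeff (runD n d) t = coeff v t := by
  induction he using Relation.ReflTransGen.head_induction_on with
  | refl =>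
    exact ⟨0, fun n _ => by rw [runD_of_val hv]; exact ⟨hv, fun _ => rfl⟩⟩
  | head hstep _ ih =>
    obtain ⟨N₁, h₁⟩ := ih
    obtain ⟨a, s, s', r, hc1, hc2, hat⟩ := hstep
    refine ⟨N₁ + 1, ?_⟩
    intro n hn
    obtain ⟨m, rfl⟩ : ∃ m, n = m + 1 := ⟨n - 1, by omega⟩
    have hm : N₁ ≤ m := by omega
    obtain ⟨hval₁, hcoe₁⟩ := h₁ m hm
    -- middle distribution at time m
    have hmidc := cong_runD m hc2
    have hmid_eq : runD m ((Distr.smul a s').add r) = (Distr.smul a (runD m s')).add (runD m r) := by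
      rw [runD_add, runD_smul]
    have hvalmid : IsValD ((Distr.smul a (runD m s')).add (runD m r)) := by
      rw [← hmid_eq]; exact (isvald_cong hmidc).mp hval₁
    have hvs' : IsValD (runD m s') := hvalmid.1
    have hvr : IsValD (runD m r) := hvalmid.2
    -- compute runD (m+1) of the decomposition of d
    have hd_eq : runD (m+1) ((Distr.smul a (Distr.single s)).add r)
        = (Distr.smul a (runD m s')).add (runD m r) := by
      rw [runD_add, runD_smul]
      have h1 : runD (m+1) (Distr.single s) = runD m s' := by
        show runD m (stepAllD (Distr.single s)) = runD m s'
        show runD m (stepAllT s) = runD m s'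
        rw [stepAllT_of_atom hat]
      have h2 : runD (m+1) r = runD m r := by
        rw [runD_succ_comm, stepAllD_of_val _ hvr]
      rw [h1, h2]
    have hdc := cong_runD (m+1) hc1
    rw [hd_eq] at hdc
    constructor
    · exact (isvald_cong hdc).mpr hvalmid
    · intro t
      rw [coeff_cong hdc t, ← hmid_eq, ← coeff_cong hmidc t]
      exact hcoe₁ t

lemma eval_coeff_unique {d d' v v' : Distr} (hc : Cong d d')
    (h1 : Eval d v) (h2 : Eval d' v') (hv : IsValD v) (hv' : IsValD v') :
    ∀ t, coeff v t = coeff v' t := by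
  obtain ⟨N, hN⟩ := eval_conv h1 hv
  obtain ⟨N', hN'⟩ := eval_conv h2 hv'
  intro t
  have e1 := (hN (max N N') (le_max_left _ _)).2 t
  have e2 := (hN' (max N N') (le_max_right _ _)).2 t
  rw [← e1, ← e2]
  exact coeff_cong (cong_runD _ hc) t

/-! ### Lifting evaluation through linear combinations -/

lemma step_add_left {d d' : Distr} (h : Step d d') (r : Distr) : Step (d.add r) (d'.add r) := by
  obtain ⟨a, s, s', r₀, h1, h2, hat⟩ := h
  exact ⟨a, s, s', r₀.add r,
    (Cong.addCongr h1 (Cong.refl r)).trans (Cong.addAssoc _ _ _),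
    (Cong.addCongr h2 (Cong.refl r)).trans (Cong.addAssoc _ _ _), hat⟩

lemma step_add_right {d d' : Distr} (h : Step d d') (r : Distr) : Step (r.add d) (r.add d') := by
  obtain ⟨a, s, s', r₀, h1, h2, hat⟩ := h
  exact ⟨a, s, s', r₀.add r,
    ((Cong.addComm _ _).trans (Cong.addCongr h1 (Cong.refl r))).trans (Cong.addAssoc _ _ _),
    ((Cong.addComm _ _).trans (Cong.addCongr h2 (Cong.refl r))).trans (Cong.addAssoc _ _ _), hat⟩

lemma step_smul {d d' : Distr} (h : Step d d') (c : ℂ) :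
    Step (Distr.smul c d) (Distr.smul c d') := by
  obtain ⟨a, s, s', r₀, h1, h2, hat⟩ := h
  refine ⟨c * a, s, s', Distr.smul c r₀, ?_, ?_, hat⟩
  · exact ((Cong.smulCongr c h1).trans (Cong.smulAdd c _ _)).trans
      (Cong.addCongr (Cong.smulSmul c a _) (Cong.refl _))
  · exact ((Cong.smulCongr c h2).trans (Cong.smulAdd c _ _)).trans
      (Cong.addCongr (Cong.smulSmul c a _) (Cong.refl _))

lemma eval_add_left {d d' : Distr} (h : Eval d d') (r : Distr) : Eval (d.add r) (d'.add r) := by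
  induction h with
  | refl => exact Relation.ReflTransGen.refl
  | tail _ hs ih => exact ih.tail (step_add_left hs r)

lemma eval_add_right {d d' : Distr} (h : Eval d d') (r : Distr) : Eval (r.add d) (r.add d') := by
  induction h with
  | refl => exact Relation.ReflTransGen.refl
  | tail _ hs ih => exact ih.tail (step_add_right hs r)

lemma eval_smul {d d' : Distr} (h : Eval d d') (c : ℂ) :
    Eval (Distr.smul c d) (Distr.smul c d') := by
  induction h with
  | refl => exact Relation.ReflTransGen.refl
  | tail _ hs ih => exact ih.tail (step_smul hs c)

lemma eval_combo {d₁ d₂ w₁ w₂ : Distr} (h₁ : Eval d₁ w₁) (h₂ : Eval d₂ w₂) (a b : ℂ) :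
    Eval ((Distr.smul a d₁).add (Distr.smul b d₂)) ((Distr.smul a w₁).add (Distr.smul b w₂)) :=
  (eval_add_left (eval_smul h₁ a) _).trans (eval_add_right (eval_smul h₂ b) _)

/-- Saturation: from a Cong-equivalent starting point one can reach a value with the
same coefficients. -/
lemma eval_of_cong {c d w : Distr} (h : Cong c d) (he : Eval d w) (hw : IsValD w) :
    ∃ w', IsValD w' ∧ Eval c w' ∧ ∀ t, coeff w' t = coeff w t := by
  rcases (Relation.ReflTransGen.cases_head he) with rfl | ⟨d₁, hstep, he₁⟩
  · exact ⟨c, (isvald_cong h).mpr hw, Relation.ReflTransGen.refl, coeff_cong h⟩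
  · obtain ⟨a, s, s', r, h1, h2, hat⟩ := hstep
    have : Step c d₁ := ⟨a, s, s', r, h.trans h1, h2, hat⟩
    exact ⟨w, hw, Relation.ReflTransGen.head this he₁, fun _ => rfl⟩

end LinAlg
namespace LinAlg

local notation "conj'" => (starRingEnd ℂ)

/-! ### Inner product lemmas -/

lemma coeff_mem_domD : ∀ (d : Distr) (t : Term), coeff d t ≠ 0 → t ∈ domD d
  | .zero, t, h => by simp [coeff] at h
  | .single s, t, h => by
      simp only [coeff] at h
      by_cases hs : s = t
      · simp [domD, hs]
      · simp [hs] at h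
  | .add d₁ d₂, t, h => by
      simp only [coeff] at h
      simp only [domD, Finset.mem_union]
      by_cases h1 : coeff d₁ t = 0
      · exact Or.inr (coeff_mem_domD d₂ t (by rw [h1, zero_add] at h; exact h))
      · exact Or.inl (coeff_mem_domD d₁ t h1)
  | .smul a d, t, h => by
      simp only [coeff] at h
      exact coeff_mem_domD d t (right_ne_zero_of_mul h)

lemma innerD_eq_sum {v : Distr} (w : Distr) {S : Finset Term} (hS : domD v ⊆ S) :
    innerD v w = ∑ t ∈ S, conj' (coeff v t) * coeff w t := by
  unfold innerD
  refine Finset.sum_subset hS (fun t _ ht => ?_)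
  have : coeff v t = 0 := by
    by_contra hc
    exact ht (coeff_mem_domD v t hc)
  simp [this]

lemma innerD_congr {v v' w w' : Distr} (h₁ : ∀ t, coeff v t = coeff v' t)
    (h₂ : ∀ t, coeff w t = coeff w' t) : innerD v w = innerD v' w' := by
  rw [innerD_eq_sum w (Finset.subset_union_left (s₂ := domD v')),
      innerD_eq_sum w' (Finset.subset_union_right (s₁ := domD v))]
  exact Finset.sum_congr rfl fun t _ => by rw [h₁ t, h₂ t]

lemma innerD_add_right (v w₁ w₂ : Distr) :
    innerD v (w₁.add w₂) = innerD v w₁ + innerD v w₂ := by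
  unfold innerD
  rw [← Finset.sum_add_distrib]
  exact Finset.sum_congr rfl fun t _ => by simp [coeff]; ring

lemma innerD_smul_right (v w : Distr) (a : ℂ) :
    innerD v (.smul a w) = a * innerD v w := by
  unfold innerD
  rw [Finset.mul_sum]
  exact Finset.sum_congr rfl fun t _ => by simp [coeff]; ring

lemma innerD_smul_left (v w : Distr) (a : ℂ) :
    innerD (.smul a v) w = conj' a * innerD v w := by
  unfold innerD
  rw [Finset.mul_sum]
  refine Finset.sum_congr rfl fun t _ => ?_
  show conj' (a * coeff v t) * coeff w t = _
  rw [map_mul]; ring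

lemma innerD_add_left (v₁ v₂ w : Distr) :
    innerD (v₁.add v₂) w = innerD v₁ w + innerD v₂ w := by
  have hd : domD (v₁.add v₂) = domD v₁ ∪ domD v₂ := rfl
  rw [innerD_eq_sum (v := v₁.add v₂) w (le_of_eq hd),
      innerD_eq_sum (v := v₁) w (Finset.subset_union_left),
      innerD_eq_sum (v := v₂) w (Finset.subset_union_right),
      ← Finset.sum_add_distrib]
  refine Finset.sum_congr rfl fun t _ => ?_
  show conj' (coeff v₁ t + coeff v₂ t) * coeff w t = _
  rw [map_add]; ring

lemma innerD_conj (v w : Distr) : innerD v w = conj' (innerD w v) := by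
  rw [innerD_eq_sum (v := v) w (Finset.subset_union_left (s₂ := domD w)),
      innerD_eq_sum (v := w) v (Finset.subset_union_right (s₁ := domD v))]
  rw [map_sum]
  exact Finset.sum_congr rfl fun t _ => by rw [map_mul, Complex.conj_conj]; ring

lemma innerD_self_eq (v : Distr) :
    innerD v v = ((∑ t ∈ domD v, Complex.normSq (coeff v t) : ℝ) : ℂ) := by
  unfold innerD
  push_cast
  exact Finset.sum_congr rfl fun t _ => by rw [mul_comm, Complex.mul_conj]

lemma sphere_inner {d : Distr} (h : d ∈ Sphere) : innerD d d = 1 := by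
  obtain ⟨-, hn⟩ := h
  have h1 : Real.sqrt ((innerD d d).re) = 1 := hn
  have h2 : (innerD d d).re = 1 := Real.sqrt_eq_one.mp h1
  have h3 := innerD_self_eq d
  rw [h3] at h2 ⊢
  rw [Complex.ofReal_re] at h2
  rw [h2]
  norm_num

lemma sphere_isvald {d : Distr} (h : d ∈ Sphere) : IsValD d := h.1.1

lemma sphere_fv {d : Distr} (h : d ∈ Sphere) : fvD d = ∅ := h.1.2

lemma innerD_combo (a b a' b' : ℂ) (p q p' q' : Distr) :
    innerD ((Distr.smul a p).add (Distr.smul b q)) ((Distr.smul a' p').add (Distr.smul b' q'))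
      = conj' a * a' * innerD p p' + conj' a * b' * innerD p q'
        + conj' b * a' * innerD q p' + conj' b * b' * innerD q q' := by
  rw [innerD_add_left, innerD_add_right, innerD_add_right,
      innerD_smul_left, innerD_smul_left, innerD_smul_right, innerD_smul_right,
      innerD_smul_left, innerD_smul_left, innerD_smul_right, innerD_smul_right]
  ring

end LinAlg
namespace LinAlg

local notation "conj'" => (starRingEnd ℂ)

/-! ### bsubst linearity (in the distribution argument), up to Cong -/

lemma bsubst_add (x : ℕ) (D₁ D₂ : Distr) :
    ∀ v : Distr, Cong (bsubst x (D₁.add D₂) v) ((bsubst x D₁ v).add (bsubst x D₂ v))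
  | .zero => (Cong.addZero _).symm
  | .single (.val w) => Cong.refl _
  | .single (.app a b) => (Cong.addZero _).symm
  | .single (.seq a b) => (Cong.addZero _).symm
  | .single (.letp a b c e) => (Cong.addZero _).symm
  | .single (.matc a b c e f) => (Cong.addZero _).symm
  | .add v₁ v₂ =>
      (Cong.addCongr (bsubst_add x D₁ D₂ v₁) (bsubst_add x D₁ D₂ v₂)).trans
        (cong_add_add _ _ _ _)
  | .smul a v =>
      (Cong.smulCongr a (bsubst_add x D₁ D₂ v)).trans (Cong.smulAdd a _ _)

lemma bsubst_smul (x : ℕ) (c : ℂ) (D : Distr) :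
    ∀ v : Distr, Cong (bsubst x (Distr.smul c D) v) (Distr.smul c (bsubst x D v))
  | .zero => (cong_smul_zero c).symm
  | .single (.val w) => Cong.refl _
  | .single (.app a b) => (cong_smul_zero c).symm
  | .single (.seq a b) => (cong_smul_zero c).symm
  | .single (.letp a b c' e) => (cong_smul_zero c).symm
  | .single (.matc a b c' e f) => (cong_smul_zero c).symm
  | .add v₁ v₂ =>
      (Cong.addCongr (bsubst_smul x c D v₁) (bsubst_smul x c D v₂)).trans
        (Cong.smulAdd c _ _).symm
  | .smul a v => by
      refine (Cong.smulCongr a (bsubst_smul x c D v)).trans ?_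
      refine (Cong.smulSmul a c _).trans ?_
      rw [mul_comm]
      exact (Cong.smulSmul c a _).symm

lemma applySub_append (l₁ l₂ : Subst) :
    ∀ d, applySub d (l₁ ++ l₂) = applySub (applySub d l₁) l₂ := by
  induction l₁ with
  | nil => intro d; rfl
  | cons p l ih => intro d; exact ih _

/-! ### Polarization -/

lemma polar (g D M N : ℂ)
    (h : ∀ α : ℂ, conj' α * α = 1 → 0 < 2 + 2 * (α * g).re →
      α * M + conj' α * N = (α * g + conj' α * conj' g) * D) :
    M = g * D := by
  have hh : M + N = (g + conj' g) * D := by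
    by_cases h1 : 0 < 2 + 2 * ((1 : ℂ) * g).re
    · have := h 1 (by simp) h1
      simpa using this
    · have hge : g.re ≤ -1 := by
        rw [one_mul] at h1
        push_neg at h1
        linarith
      have h2 : 0 < 2 + 2 * ((-1 : ℂ) * g).re := by
        simp only [neg_one_mul, Complex.neg_re]
        linarith
      have := h (-1) (by simp) h2
      simp only [map_neg, map_one] at this
      linear_combination -this
  have hv : M - N = (g - conj' g) * D := by
    by_cases h1 : 0 < 2 + 2 * ((Complex.I) * g).re
    · have := h Complex.I (by simp [Complex.conj_I]) h1
      rw [Complex.conj_I] at this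
      have h3 : Complex.I * (M - N - (g - conj' g) * D) = 0 := by linear_combination this
      rcases mul_eq_zero.mp h3 with h4 | h4
      · exact absurd h4 Complex.I_ne_zero
      · linear_combination h4
    · have hge : g.im ≥ 1 := by
        have : (Complex.I * g).re = -g.im := by simp [Complex.mul_re]
        rw [this] at h1
        push_neg at h1
        linarith
      have h2 : 0 < 2 + 2 * ((-Complex.I) * g).re := by
        have : ((-Complex.I) * g).re = g.im := by simp [Complex.mul_re]
        rw [this]
        linarith
      have := h (-Complex.I) (by simp [Complex.conj_I]) h2
      simp only [map_neg, Complex.conj_I, neg_neg] at this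
      have h3 : Complex.I * (M - N - (g - conj' g) * D) = 0 := by linear_combination -this
      rcases mul_eq_zero.mp h3 with h4 | h4
      · exact absurd h4 Complex.I_ne_zero
      · linear_combination h4
  linear_combination (hh + hv) / 2

/-! ### Membership of normalized combinations in sharp types -/

lemma combo_mem_sharp {X : Set Distr} {v₁ v₂ : Distr}
    (h₁ : v₁ ∈ sharpT X) (h₂ : v₂ ∈ sharpT X)
    {α : ℂ} (hα : conj' α * α = 1) {c : ℝ} (hc : 0 < c)
    (hc2 : (c : ℂ)^2 = 2 + α * innerD v₁ v₂ + conj' α * conj' (innerD v₁ v₂)) :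
    ((Distr.smul ((c : ℂ))⁻¹ v₁).add (Distr.smul (α * ((c : ℂ))⁻¹) v₂)) ∈ sharpT X := by
  obtain ⟨hs₁, hsp₁⟩ := h₁
  obtain ⟨hs₂, hsp₂⟩ := h₂
  have hcC : (c : ℂ) ≠ 0 := by
    simp only [ne_eq, Complex.ofReal_eq_zero]
    exact ne_of_gt hc
  have hconj_inv : conj' (((c : ℂ))⁻¹) = ((c : ℂ))⁻¹ := by
    rw [map_inv₀, Complex.conj_ofReal]
  have hII : innerD ((Distr.smul ((c:ℂ))⁻¹ v₁).add (Distr.smul (α * ((c:ℂ))⁻¹) v₂))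
      ((Distr.smul ((c:ℂ))⁻¹ v₁).add (Distr.smul (α * ((c:ℂ))⁻¹) v₂)) = 1 := by
    rw [innerD_combo, sphere_inner hsp₁, sphere_inner hsp₂,
        innerD_conj v₂ v₁]
    rw [map_mul, hconj_inv]
    field_simp
    linear_combination -hc2 + hα
  constructor
  · exact Span.add (Span.smul _ hs₁) (Span.smul _ hs₂)
  · refine ⟨⟨?_, ?_⟩, ?_⟩
    · exact ⟨show IsValD v₁ from sphere_isvald hsp₁, show IsValD v₂ from sphere_isvald hsp₂⟩
    · show fvD _ = ∅
      simp only [fvD]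
      rw [sphere_fv hsp₁, sphere_fv hsp₂]
      simp
    · show Real.sqrt _ = 1
      rw [hII]
      simp

end LinAlg
namespace LinAlg

local notation "conj'" => (starRingEnd ℂ)

/-- Key polarization input: hypotheses of the combined-point construction. -/
lemma sqrt_spec {z : ℂ} (hpos : 0 < 2 + 2 * z.re) :
    0 < Real.sqrt (2 + 2 * z.re) ∧
      ((Real.sqrt (2 + 2 * z.re) : ℝ) : ℂ)^2 = 2 + z + conj' z := by
  constructor
  · exact Real.sqrt_pos.mpr hpos
  · have h1 : (Real.sqrt (2 + 2 * z.re))^2 = 2 + 2 * z.re := Real.sq_sqrt (le_of_lt hpos)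
    have h2 : (((Real.sqrt (2 + 2*z.re)) : ℝ) : ℂ)^2 = ((2 + 2 * z.re : ℝ) : ℂ) := by
      exact_mod_cast h1
    rw [h2, add_assoc, Complex.add_conj]
    push_cast
    ring

/-- **One-variable inner product multiplication.** -/
lemma L1 {C B : Set Distr} (hC : C ⊆ Sphere) (E : Distr) (y : ℕ)
    (hreal : ∀ v ∈ sharpT B, Realizes C (bsubst y E v))
    {v₁ v₂ w₁ w₂ : Distr} (hv₁ : v₁ ∈ sharpT B) (hv₂ : v₂ ∈ sharpT B)
    (hw₁ : IsValD w₁) (hw₂ : IsValD w₂)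
    (he₁ : Eval (bsubst y E v₁) w₁) (he₂ : Eval (bsubst y E v₂) w₂) :
    innerD w₁ w₂ = innerD v₁ v₂ := by
  have hnormW : ∀ v w, v ∈ sharpT B → IsValD w → Eval (bsubst y E v) w → innerD w w = 1 := by
    intro v w hv hw hew
    obtain ⟨z, hzC, hez⟩ := hreal v hv
    have hz := hC hzC
    have hcoeff := eval_coeff_unique (Cong.refl _) hew hez hw (sphere_isvald hz)
    rw [innerD_congr hcoeff hcoeff]
    exact sphere_inner hz
  have hn₁ : innerD w₁ w₁ = 1 := hnormW v₁ w₁ hv₁ hw₁ he₁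
  have hn₂ : innerD w₂ w₂ = 1 := hnormW v₂ w₂ hv₂ hw₂ he₂
  set γ := innerD v₁ v₂ with hγ
  set μ := innerD w₁ w₂ with hμ
  have key : ∀ α : ℂ, conj' α * α = 1 → 0 < 2 + 2 * (α * γ).re →
      α * μ + conj' α * (conj' μ) = (α * γ + conj' α * conj' γ) * 1 := by
    intro α hα hpos
    obtain ⟨hc, hc2⟩ := sqrt_spec hpos
    set c := Real.sqrt (2 + 2 * (α * γ).re)
    have hc2' : ((c : ℝ) : ℂ)^2 = 2 + α * innerD v₁ v₂ + conj' α * conj' (innerD v₁ v₂) := by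
      rw [hc2, map_mul]
    set a : ℂ := ((c : ℝ) : ℂ)⁻¹ with ha
    set b : ℂ := α * ((c : ℝ) : ℂ)⁻¹ with hb
    have hV : ((Distr.smul a v₁).add (Distr.smul b v₂)) ∈ sharpT B :=
      combo_mem_sharp hv₁ hv₂ hα hc hc2'
    obtain ⟨z, hzC, hez⟩ := hreal _ hV
    have hbs : bsubst y E ((Distr.smul a v₁).add (Distr.smul b v₂))
        = (Distr.smul a (bsubst y E v₁)).add (Distr.smul b (bsubst y E v₂)) := rfl
    have hW : Eval (bsubst y E ((Distr.smul a v₁).add (Distr.smul b v₂)))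
        ((Distr.smul a w₁).add (Distr.smul b w₂)) := by
      rw [hbs]; exact eval_combo he₁ he₂ a b
    have hWval : IsValD ((Distr.smul a w₁).add (Distr.smul b w₂)) := ⟨hw₁, hw₂⟩
    have hcoe := eval_coeff_unique (Cong.refl _) hW hez hWval (sphere_isvald (hC hzC))
    have h1 : innerD ((Distr.smul a w₁).add (Distr.smul b w₂))
        ((Distr.smul a w₁).add (Distr.smul b w₂)) = 1 := by
      rw [innerD_congr hcoe hcoe]
      exact sphere_inner (hC hzC)
    rw [innerD_combo, hn₁, hn₂, ← hμ, innerD_conj w₂ w₁, ← hμ] at h1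
    have hconj_inv : conj' (((c : ℝ) : ℂ)⁻¹) = ((c : ℝ) : ℂ)⁻¹ := by
      rw [map_inv₀, Complex.conj_ofReal]
    have hcC : ((c : ℝ) : ℂ) ≠ 0 := by
      simp only [ne_eq, Complex.ofReal_eq_zero]
      exact ne_of_gt hc
    rw [ha, hb] at h1
    rw [map_mul, hconj_inv] at h1
    field_simp at h1
    linear_combination h1 + hc2' - hα
  have := polar γ 1 μ (conj' μ) key
  rw [mul_one] at this
  exact this

end LinAlg
namespace LinAlg

local notation "conj''" => (starRingEnd ℂ)

/-- Typed terms multiply inner products (two variables). -/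
theorem typed_multiply_inner (Δ : Ctx) (hΔ : CtxUnitary Δ)
    (hnodup : (Δ.map Prod.fst).Nodup)
    (A B C : Set Distr) (hA : A ⊆ Sphere) (hB : B ⊆ Sphere) (hC : C ⊆ Sphere)
    (x y : ℕ) (hx : x ∉ Δ.map Prod.fst) (hy : y ∉ Δ.map Prod.fst) (hxy : x ≠ y)
    (s : Distr)
    (hjud : ValidJ (Δ ++ [(x, sharpT A), (y, sharpT B)]) s C)
    (σ : Subst) (hσ : SubMem σ Δ)
    (u₁ u₂ : Distr) (hu₁ : u₁ ∈ sharpT A) (hu₂ : u₂ ∈ sharpT A)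
    (v₁ v₂ : Distr) (hv₁ : v₁ ∈ sharpT B) (hv₂ : v₂ ∈ sharpT B) :
    ∃ w₁ w₂ : Distr, w₁ ∈ C ∧ w₂ ∈ C ∧
      Eval (applySub s (σ ++ [(x, u₁), (y, v₁)])) w₁ ∧
      Eval (applySub s (σ ++ [(x, u₂), (y, v₂)])) w₂ ∧
      innerD w₁ w₂ = innerD u₁ u₂ * innerD v₁ v₂ := by
  obtain ⟨-, -, hsem⟩ := hjud
  have happ : ∀ u v : Distr,
      applySub s (σ ++ [(x, u), (y, v)]) = bsubst y (bsubst x (applySub s σ) u) v := by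
    intro u v
    rw [applySub_append]
    rfl
  have hR : ∀ u ∈ sharpT A, ∀ v ∈ sharpT B,
      Realizes C (bsubst y (bsubst x (applySub s σ) u) v) := by
    intro u hu v hv
    have hmem : SubMem (σ ++ [(x, u), (y, v)]) (Δ ++ [(x, sharpT A), (y, sharpT B)]) :=
      List.rel_append hσ
        (List.Forall₂.cons ⟨rfl, hu⟩ (List.Forall₂.cons ⟨rfl, hv⟩ List.Forall₂.nil))
    have := hsem _ hmem
    rwa [happ] at this
  set e' := applySub s σ with he'
  obtain ⟨w₁₁, hw₁₁C, he₁₁⟩ := hR u₁ hu₁ v₁ hv₁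
  obtain ⟨w₁₂, hw₁₂C, he₁₂⟩ := hR u₁ hu₁ v₂ hv₂
  obtain ⟨w₂₁, hw₂₁C, he₂₁⟩ := hR u₂ hu₂ v₁ hv₁
  obtain ⟨w₂₂, hw₂₂C, he₂₂⟩ := hR u₂ hu₂ v₂ hv₂
  refine ⟨w₁₁, w₂₂, hw₁₁C, hw₂₂C, ?_, ?_, ?_⟩
  · rw [happ]; exact he₁₁
  · rw [happ]; exact he₂₂
  have hδ₁ : innerD w₁₁ w₁₂ = innerD v₁ v₂ :=
    L1 hC (bsubst x e' u₁) y (fun v hv => hR u₁ hu₁ v hv) hv₁ hv₂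
      (sphere_isvald (hC hw₁₁C)) (sphere_isvald (hC hw₁₂C)) he₁₁ he₁₂
  have hδ₂ : innerD w₂₁ w₂₂ = innerD v₁ v₂ :=
    L1 hC (bsubst x e' u₂) y (fun v hv => hR u₂ hu₂ v hv) hv₁ hv₂
      (sphere_isvald (hC hw₂₁C)) (sphere_isvald (hC hw₂₂C)) he₂₁ he₂₂
  set γ := innerD u₁ u₂ with hγ
  set δ := innerD v₁ v₂ with hδ
  have key : ∀ α : ℂ, conj'' α * α = 1 → 0 < 2 + 2 * (α * γ).re →
      α * innerD w₁₁ w₂₂ + conj'' α * innerD w₂₁ w₁₂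
        = (α * γ + conj'' α * conj'' γ) * δ := by
    intro α hα hpos
    obtain ⟨hc, hc2⟩ := sqrt_spec hpos
    set c := Real.sqrt (2 + 2 * (α * γ).re)
    have hc2' : ((c : ℝ) : ℂ)^2 = 2 + α * innerD u₁ u₂ + conj'' α * conj'' (innerD u₁ u₂) := by
      rw [hc2, map_mul]
    set a : ℂ := ((c : ℝ) : ℂ)⁻¹ with ha
    set b : ℂ := α * ((c : ℝ) : ℂ)⁻¹ with hb
    have hU : ((Distr.smul a u₁).add (Distr.smul b u₂)) ∈ sharpT A :=
      combo_mem_sharp hu₁ hu₂ hα hc hc2'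
    set U := (Distr.smul a u₁).add (Distr.smul b u₂) with hUdef
    have hcong : ∀ v : Distr, Cong (bsubst y (bsubst x e' U) v)
        ((Distr.smul a (bsubst y (bsubst x e' u₁) v)).add
          (Distr.smul b (bsubst y (bsubst x e' u₂) v))) := by
      intro v
      have h0 : bsubst x e' U
          = (Distr.smul a (bsubst x e' u₁)).add (Distr.smul b (bsubst x e' u₂)) := rfl
      rw [h0]
      exact (bsubst_add y _ _ v).trans
        (Cong.addCongr (bsubst_smul y a _ v) (bsubst_smul y b _ v))
    have mk : ∀ (v wA wB : Distr), IsValD wA → IsValD wB →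
        Eval (bsubst y (bsubst x e' u₁) v) wA → Eval (bsubst y (bsubst x e' u₂) v) wB →
        ∃ W', IsValD W' ∧ Eval (bsubst y (bsubst x e' U) v) W' ∧
          ∀ t, coeff W' t = coeff ((Distr.smul a wA).add (Distr.smul b wB)) t := by
      intro v wA wB hVA hVB heA heB
      exact eval_of_cong (hcong v) (eval_combo heA heB a b) ⟨hVA, hVB⟩
    obtain ⟨W1, hW1v, hW1e, hW1c⟩ :=
      mk v₁ w₁₁ w₂₁ (sphere_isvald (hC hw₁₁C)) (sphere_isvald (hC hw₂₁C)) he₁₁ he₂₁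
    obtain ⟨W2, hW2v, hW2e, hW2c⟩ :=
      mk v₂ w₁₂ w₂₂ (sphere_isvald (hC hw₁₂C)) (sphere_isvald (hC hw₂₂C)) he₁₂ he₂₂
    have hδα : innerD W1 W2 = δ :=
      L1 hC (bsubst x e' U) y (fun v hv => hR U hU v hv) hv₁ hv₂ hW1v hW2v hW1e hW2e
    rw [innerD_congr hW1c hW2c, innerD_combo, hδ₁, hδ₂] at hδα
    have hconj_inv : conj'' (((c : ℝ) : ℂ)⁻¹) = ((c : ℝ) : ℂ)⁻¹ := by
      rw [map_inv₀, Complex.conj_ofReal]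
    have hcC : ((c : ℝ) : ℂ) ≠ 0 := by
      simp only [ne_eq, Complex.ofReal_eq_zero]
      exact ne_of_gt hc
    rw [ha, hb] at hδα
    rw [map_mul, hconj_inv] at hδα
    field_simp at hδα
    linear_combination hδα + δ * hc2' - δ * hα
  have := polar γ δ (innerD w₁₁ w₂₂) (innerD w₂₁ w₁₂) key
  rw [hγ, hδ] at this
  exact this

end LinAlg
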